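/- For z = e^{2πi/N} an N-th root of unity and any integer J with 0 ≤ J ≤ N, the sum ∑_{k=1}^{N-1} z^{kJ} / ((1 - z^k)(1 - z^{-k})) equals (N² - 1)/12 - J(N - J)/2. -/

import Mathlib

open Complex Finset

namespace HaldaneAux

noncomputable def ζ (N : ℕ) : ℂ := Complex.exp (2 * Real.pi * Complex.I / N)

noncomputable def f (N J : ℕ) : ℂ :=
  ∑ k ∈ Finset.Ico 1 N, ζ N ^ (k * J) / ((1 - ζ N ^ k) * (1 - (ζ N ^ k)⁻¹))

variable {N : ℕ}

lemma hprim (hN : 2 ≤ N) : IsPrimitiveRoot (ζ N) N :=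
  Complex.isPrimitiveRoot_exp N (by omega)

lemma zeta_pow_N (hN : 2 ≤ N) : ζ N ^ N = 1 := (hprim hN).pow_eq_one

lemma zeta_pow_ne_one (hN : 2 ≤ N) {l : ℕ} (h1 : 0 < l) (h2 : l < N) : ζ N ^ l ≠ 1 :=
  (hprim hN).pow_ne_one_of_pos_of_lt h1.ne' h2

lemma zeta_ne_zero : ζ N ≠ 0 := Complex.exp_ne_zero _

/-- geometric sum over `Ico 1 N` -/
lemma sum_pow_eq_neg_one (hN : 2 ≤ N) {w : ℂ} (hwN : w ^ N = 1) (hw1 : w ≠ 1) :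
    ∑ k ∈ Finset.Ico 1 N, w ^ k = -1 := by
  have h := Finset.sum_Ico_eq_sub (fun k => w ^ k) (by omega : 1 ≤ N)
  rw [h, geom_sum_eq hw1, hwN]
  simp

lemma sum_pow_eq_zero (_hN : 2 ≤ N) {w : ℂ} (hwN : w ^ N = 1) (hw1 : w ≠ 1) :
    ∑ k ∈ Finset.range N, w ^ k = 0 := by
  rw [geom_sum_eq hw1, hwN]
  simp

lemma term_id (w : ℂ) (J : ℕ) (hw0 : w ≠ 0) (hw1' : (1:ℂ) - w ≠ 0) (hw2' : (1:ℂ) - w⁻¹ ≠ 0) :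
    w ^ (J + 2) / ((1 - w) * (1 - w⁻¹)) - 2 * (w ^ (J + 1) / ((1 - w) * (1 - w⁻¹))) +
      w ^ J / ((1 - w) * (1 - w⁻¹)) = -(w ^ (J + 1)) := by
  have hD : (1 - w) * (1 - w⁻¹) ≠ 0 := mul_ne_zero hw1' hw2'
  have hinv : w * w⁻¹ = 1 := mul_inv_cancel₀ hw0
  have hkey : w * ((1 - w) * (1 - w⁻¹)) = -((1 - w) ^ 2) := by
    linear_combination (w - 1) * hinv
  have hcomb : w ^ (J + 2) / ((1 - w) * (1 - w⁻¹)) - 2 * (w ^ (J + 1) / ((1 - w) * (1 - w⁻¹))) +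
      w ^ J / ((1 - w) * (1 - w⁻¹)) =
      (w ^ (J + 2) - 2 * w ^ (J + 1) + w ^ J) / ((1 - w) * (1 - w⁻¹)) := by ring
  rw [hcomb, div_eq_iff hD]
  linear_combination (w ^ J) * hkey

/-- second-difference recurrence -/
lemma rec (hN : 2 ≤ N) (J : ℕ) (hJ : J + 2 ≤ N) :
    f N (J + 2) = 2 * f N (J + 1) - f N J + 1 := by
  have key : f N (J + 2) - 2 * f N (J + 1) + f N J = 1 := by
    have hterm : ∀ k ∈ Finset.Ico 1 N,
        ζ N ^ (k * (J + 2)) / ((1 - ζ N ^ k) * (1 - (ζ N ^ k)⁻¹)) -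
          2 * (ζ N ^ (k * (J + 1)) / ((1 - ζ N ^ k) * (1 - (ζ N ^ k)⁻¹))) +
          ζ N ^ (k * J) / ((1 - ζ N ^ k) * (1 - (ζ N ^ k)⁻¹)) =
        -((ζ N ^ (J + 1)) ^ k) := by
      intro k hk
      simp only [Finset.mem_Ico] at hk
      have hw0 : ζ N ^ k ≠ 0 := pow_ne_zero _ zeta_ne_zero
      have hw1 : ζ N ^ k ≠ 1 := zeta_pow_ne_one hN hk.1 hk.2
      have hw1' : (1 : ℂ) - ζ N ^ k ≠ 0 := sub_ne_zero.mpr (Ne.symm hw1)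
      have hw2' : (1 : ℂ) - (ζ N ^ k)⁻¹ ≠ 0 := by
        rw [sub_ne_zero]
        intro h
        exact hw1 (by rw [← inv_inv (ζ N ^ k), ← h, inv_one])
      have e1 : ζ N ^ (k * (J + 2)) = (ζ N ^ k) ^ (J + 2) := by rw [← pow_mul]
      have e2 : ζ N ^ (k * (J + 1)) = (ζ N ^ k) ^ (J + 1) := by rw [← pow_mul]
      have e3 : ζ N ^ (k * J) = (ζ N ^ k) ^ J := by rw [← pow_mul]
      have e4 : (ζ N ^ (J + 1)) ^ k = (ζ N ^ k) ^ (J + 1) := by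
        rw [← pow_mul, ← pow_mul, mul_comm]
      rw [e1, e2, e3, e4]
      exact term_id _ _ hw0 hw1' hw2'
    have hsum : f N (J + 2) - 2 * f N (J + 1) + f N J =
        ∑ k ∈ Finset.Ico 1 N, -((ζ N ^ (J + 1)) ^ k) := by
      rw [f, f, f, Finset.mul_sum, ← Finset.sum_sub_distrib, ← Finset.sum_add_distrib]
      exact Finset.sum_congr rfl hterm
    rw [hsum, Finset.sum_neg_distrib,
      sum_pow_eq_neg_one hN (by rw [← pow_mul, mul_comm, pow_mul, zeta_pow_N hN, one_pow])
        (zeta_pow_ne_one hN (by omega) (by omega))]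
    ring
  linear_combination key

/-- closed form in terms of f 0 and f 1 -/
lemma closed (hN : 2 ≤ N) (J : ℕ) (hJ : J ≤ N) :
    f N J = f N 0 + (J : ℂ) * (f N 1 - f N 0) + (J : ℂ) * ((J : ℂ) - 1) / 2 := by
  induction J using Nat.strong_induction_on with
  | _ J ih =>
    match J, hJ with
    | 0, _ => push_cast; ring
    | 1, _ => push_cast; ring
    | (J + 2), hJ =>
      rw [rec hN J hJ, ih (J + 1) (by omega) (by omega), ih J (by omega) (by omega)]
      push_cast
      ring

lemma fN_eq_f0 (hN : 2 ≤ N) : f N N = f N 0 := by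
  refine Finset.sum_congr rfl fun k _ => ?_
  rw [mul_comm k N, pow_mul, zeta_pow_N hN, one_pow, mul_zero, pow_zero]

lemma sum_f (hN : 2 ≤ N) : ∑ J ∈ Finset.range N, f N J = 0 := by
  rw [show ∑ J ∈ Finset.range N, f N J = ∑ k ∈ Finset.Ico 1 N,
      (∑ J ∈ Finset.range N, ζ N ^ (k * J)) / ((1 - ζ N ^ k) * (1 - (ζ N ^ k)⁻¹)) by
    simp only [f, Finset.sum_div]
    exact Finset.sum_comm]
  refine Finset.sum_eq_zero fun k hk => ?_
  simp only [Finset.mem_Ico] at hk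
  have : ∑ J ∈ Finset.range N, ζ N ^ (k * J) = 0 := by
    have := sum_pow_eq_zero hN (w := ζ N ^ k)
      (by rw [← pow_mul, mul_comm, pow_mul, zeta_pow_N hN, one_pow])
      (zeta_pow_ne_one hN hk.1 hk.2)
    rw [← this]
    exact Finset.sum_congr rfl fun J _ => by rw [← pow_mul]
  rw [this, zero_div]

lemma sum_range_cast (n : ℕ) : ∑ J ∈ Finset.range n, (J : ℂ) = n * (n - 1) / 2 := by
  induction n with
  | zero => simp
  | succ n ih => rw [Finset.sum_range_succ, ih]; push_cast; ring

lemma sum_range_cast2 (n : ℕ) :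
    ∑ J ∈ Finset.range n, (J : ℂ) * ((J : ℂ) - 1) = n * (n - 1) * (n - 2) / 3 := by
  induction n with
  | zero => simp
  | succ n ih => rw [Finset.sum_range_succ, ih]; push_cast; ring

lemma c_eq (hN : 2 ≤ N) : f N 1 - f N 0 = -((N : ℂ) - 1) / 2 := by
  have hNne : (N : ℂ) ≠ 0 := Nat.cast_ne_zero.mpr (by omega)
  have h := closed hN N le_rfl
  rw [fN_eq_f0 hN] at h
  apply mul_left_cancel₀ hNne
  linear_combination -h

lemma f0_eq (hN : 2 ≤ N) : f N 0 = ((N : ℂ) ^ 2 - 1) / 12 := by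
  have hNne : (N : ℂ) ≠ 0 := Nat.cast_ne_zero.mpr (by omega)
  have h := sum_f hN
  have h2 : ∑ J ∈ Finset.range N, f N J =
      ∑ J ∈ Finset.range N, (f N 0 + (J : ℂ) * (f N 1 - f N 0) + (J : ℂ) * ((J : ℂ) - 1) / 2) :=
    Finset.sum_congr rfl fun J hJ => closed hN J (le_of_lt (Finset.mem_range.mp hJ))
  rw [h2] at h
  simp only [Finset.sum_add_distrib, Finset.sum_const, Finset.card_range, nsmul_eq_mul,
    ← Finset.sum_mul, ← Finset.sum_div, sum_range_cast, sum_range_cast2, c_eq hN] at h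
  apply mul_left_cancel₀ hNne
  linear_combination h

lemma f_eq (hN : 2 ≤ N) (J : ℕ) (hJ : J ≤ N) :
    f N J = ((N : ℂ) ^ 2 - 1) / 12 - (J : ℂ) * ((N : ℂ) - (J : ℂ)) / 2 := by
  rw [closed hN J hJ, c_eq hN, f0_eq hN]
  ring

end HaldaneAux

/-- Haldane summation formula: for `z = exp(2πi/N)` and `0 ≤ J ≤ N`,
`∑_{k=1}^{N-1} z^{kJ}/((1-z^k)(1-z^{-k})) = (N²-1)/12 - J(N-J)/2`. -/
theorem haldane_sum (N : ℕ) (hN : 2 ≤ N) (J : ℕ) (hJ : J ≤ N) :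
    ∑ k ∈ Finset.Ico 1 N,
      (Complex.exp (2 * Real.pi * Complex.I / N)) ^ (k * J) /
        ((1 - (Complex.exp (2 * Real.pi * Complex.I / N)) ^ k) *
          (1 - (Complex.exp (2 * Real.pi * Complex.I / N)) ^ (-(k : ℤ)))) =
      ((N : ℂ) ^ 2 - 1) / 12 - (J : ℂ) * ((N : ℂ) - (J : ℂ)) / 2 := by
  have := HaldaneAux.f_eq hN J hJ
  rw [HaldaneAux.f] at this
  rw [← this]
  refine Finset.sum_congr rfl fun k _ => ?_
  rw [show (Complex.exp (2 * Real.pi * Complex.I / N)) ^ (-(k : ℤ)) =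
      ((Complex.exp (2 * Real.pi * Complex.I / N)) ^ k)⁻¹ by
    rw [zpow_neg, zpow_natCast]]
  rfl
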